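/- arXiv:1003.5072 — 2 statements merged into one kernel-verified Lean document; each statement's English description precedes it below -/
import Mathlib

section
/- Let n ≥ 1 and t > 0. Then for every measurable function f : ℝ^n → ℝ with ∫ |f| V_t dγ < ∞ one has ‖N_t f‖_{L²(γ)} ≤ ∫_{ℝ^n} |f(y)| V_t(y) dγ(y), where V_t(y) = (1 − e^{−4t})^{−n/4} · exp( |y|²/(2(1 + e^{2t})) ). -/
open MeasureTheory Real
open scoped ENNReal

noncomputable def gaussianMeasure (n : ℕ) : Measure (EuclideanSpace ℝ (Fin n)) :=
  volume.withDensity fun x => ENNReal.ofReal ((2 * π) ^ (-(n : ℝ) / 2) * Real.exp (-‖x‖ ^ 2 / 2))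

/-- Ornstein-Uhlenbeck semigroup via the Mehler formula. -/
noncomputable def OU (n : ℕ) (t : ℝ) (f : EuclideanSpace ℝ (Fin n) → ℝ)
    (x : EuclideanSpace ℝ (Fin n)) : ℝ :=
  ∫ y, f (Real.exp (-t) • x + Real.sqrt (1 - Real.exp (-2 * t)) • y) ∂(gaussianMeasure n)

/-- The weight `V_t(y) = (1-e^{-4t})^{-n/4} exp(|y|²/(2(1+e^{2t})))`. -/
noncomputable def Vweight (n : ℕ) (t : ℝ) (y : EuclideanSpace ℝ (Fin n)) : ℝ :=
  (1 - Real.exp (-4 * t)) ^ (-(n : ℝ) / 4) *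
    Real.exp (‖y‖ ^ 2 / (2 * (1 + Real.exp (2 * t))))

section Aux

local notation "⟪" x ", " y "⟫" => @inner ℝ _ _ x y

lemma my_integrable_rexp {n : ℕ} {b : ℝ} (hb : 0 < b) (c : ℝ)
    (w : EuclideanSpace ℝ (Fin n)) :
    Integrable (fun v : EuclideanSpace ℝ (Fin n) => rexp (-b * ‖v‖ ^ 2 + c * ⟪w, v⟫)) := by
  have h := (GaussianFourier.integrable_cexp_neg_mul_sq_norm_add (V := EuclideanSpace ℝ (Fin n))
    (b := (b : ℂ)) (by simpa using hb) (c : ℂ) w).norm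
  convert h using 2 with v
  rw [Complex.norm_exp]
  congr 1
  simp [Complex.add_re, Complex.mul_re, ← Complex.ofReal_pow]

lemma my_integral_rexp {n : ℕ} {b : ℝ} (hb : 0 < b) (c : ℝ)
    (w : EuclideanSpace ℝ (Fin n)) :
    ∫ v : EuclideanSpace ℝ (Fin n), rexp (-b * ‖v‖ ^ 2 + c * ⟪w, v⟫) =
      (π / b) ^ ((n : ℝ) / 2) * rexp (c ^ 2 * ‖w‖ ^ 2 / (4 * b)) := by
  have h := GaussianFourier.integral_cexp_neg_mul_sq_norm_add (V := EuclideanSpace ℝ (Fin n))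
    (b := (b : ℂ)) (by simpa using hb) (c : ℂ) w
  rw [finrank_euclideanSpace_fin] at h
  have h1 : (∫ v : EuclideanSpace ℝ (Fin n), Complex.exp (-(b:ℂ) * ‖v‖^2 + (c:ℂ) * ⟪w,v⟫))
      = ∫ v : EuclideanSpace ℝ (Fin n), ((rexp (-b * ‖v‖ ^ 2 + c * ⟪w, v⟫) : ℝ) : ℂ) := by
    congr with v
    rw [Complex.ofReal_exp]
    push_cast
    ring_nf
  have h3 : ((∫ v : EuclideanSpace ℝ (Fin n), rexp (-b * ‖v‖ ^ 2 + c * ⟪w, v⟫) : ℝ) : ℂ)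
      = (↑π / ↑b) ^ ((n : ℂ) / 2) * Complex.exp (↑c ^ 2 * ↑‖w‖ ^ 2 / (4 * ↑b)) := by
    rw [← h, h1]
    exact (integral_ofReal (𝕜 := ℂ)).symm
  rw [← Complex.ofReal_inj, h3, Complex.ofReal_mul]
  congr 1
  · rw [Complex.ofReal_cpow (by positivity : (0:ℝ) ≤ π / b)]
    push_cast
    rfl
  · rw [Complex.ofReal_exp]
    congr 1
    push_cast
    ring

lemma my_lintegral_comp_add_smul {n : ℕ} (v : EuclideanSpace ℝ (Fin n)) {s : ℝ} (hs : 0 < s)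
    {φ : EuclideanSpace ℝ (Fin n) → ℝ≥0∞} (hφ : Measurable φ) :
    ∫⁻ y, φ (v + s • y) = (ENNReal.ofReal (s ^ n))⁻¹ * ∫⁻ z, φ z := by
  have hψ : Measurable fun w : EuclideanSpace ℝ (Fin n) => φ (v + w) :=
    hφ.comp (measurable_const_add v)
  have h1 : ∫⁻ y, φ (v + s • y) = ∫⁻ w, φ (v + w) ∂(Measure.map (s • ·) volume) := by
    rw [lintegral_map hψ (measurable_const_smul s)]
  rw [h1, Measure.map_addHaar_smul volume hs.ne', lintegral_smul_measure,
    finrank_euclideanSpace_fin, lintegral_add_left_eq_self (fun w => φ w) v,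
    abs_of_nonneg (by positivity), ENNReal.ofReal_inv_of_pos (by positivity), smul_eq_mul]

variable {n : ℕ} {a s cn : ℝ}

/-- Pointwise rewriting of the squared kernel times density as a Gaussian. -/
lemma kernel_pt (hs0 : 0 < s)
    (z x : EuclideanSpace ℝ (Fin n)) :
    (cn * ((s^n : ℝ))⁻¹ * rexp (-‖z - a • x‖^2/(2*s^2)))^2 * (cn * rexp (-‖x‖^2/2))
      = (cn^3 * (((s^n : ℝ))⁻¹)^2 * rexp (-‖z‖^2/s^2)) *
        rexp (-(1/2 + a^2/s^2) * ‖x‖^2 + (2*a/s^2) * ⟪z, x⟫) := by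
  have hnorm : ‖z - a • x‖^2 = ‖z‖^2 - 2*(a*⟪z, x⟫) + a^2*‖x‖^2 := by
    rw [norm_sub_sq_real, real_inner_smul_right, norm_smul]
    simp only [Real.norm_eq_abs, mul_pow, sq_abs]
  rw [hnorm]
  rw [show ((cn * ((s^n : ℝ))⁻¹ * rexp (-(‖z‖^2 - 2*(a*⟪z, x⟫) + a^2*‖x‖^2)/(2*s^2)))^2
        * (cn * rexp (-‖x‖^2/2)) : ℝ)
      = cn^3 * (((s^n : ℝ))⁻¹)^2 *
        (rexp (-(‖z‖^2 - 2*(a*⟪z, x⟫) + a^2*‖x‖^2)/(2*s^2))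
          * rexp (-(‖z‖^2 - 2*(a*⟪z, x⟫) + a^2*‖x‖^2)/(2*s^2)) * rexp (-‖x‖^2/2)) by ring]
  rw [← Real.exp_add, ← Real.exp_add]
  have hexp : -(‖z‖^2 - 2*(a*⟪z, x⟫) + a^2*‖x‖^2)/(2*s^2) +
        -(‖z‖^2 - 2*(a*⟪z, x⟫) + a^2*‖x‖^2)/(2*s^2) + -‖x‖^2/2
      = -‖z‖^2/s^2 + (-(1/2 + a^2/s^2) * ‖x‖^2 + (2*a/s^2) * ⟪z, x⟫) := by
    field_simp
    ring
  rw [hexp, Real.exp_add]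
  ring

private lemma hsq_rpow {u : ℝ} (hu : 0 ≤ u) (y : ℝ) : ((u^2 : ℝ)) ^ y = u ^ (2*y) := by
  rw [← Real.rpow_natCast u 2, ← Real.rpow_mul hu]
  norm_num

lemma kernel_L2_integrable (hs0 : 0 < s) (z : EuclideanSpace ℝ (Fin n)) :
    Integrable (fun x : EuclideanSpace ℝ (Fin n) =>
      (cn * ((s^n : ℝ))⁻¹ * rexp (-‖z - a • x‖^2/(2*s^2)))^2 * (cn * rexp (-‖x‖^2/2))) := by
  have hb : (0:ℝ) < 1/2 + a^2/s^2 := by positivity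
  simp_rw [kernel_pt hs0 z]
  exact (my_integrable_rexp hb (2*a/s^2) z).const_mul _

/-- The Gaussian integral of the squared kernel. -/
lemma kernel_L2 (ha1 : a < 1) (hs0 : 0 < s) (hss : s^2 = 1 - a^2)
    (hcn : cn = (2*π) ^ (-(n:ℝ)/2)) (z : EuclideanSpace ℝ (Fin n)) :
    ∫ x : EuclideanSpace ℝ (Fin n),
        (cn * ((s^n : ℝ))⁻¹ * rexp (-‖z - a • x‖^2/(2*s^2)))^2 * (cn * rexp (-‖x‖^2/2))
      = (cn * (s^2*(1+a^2)) ^ (-(n:ℝ)/4) * rexp (-‖z‖^2/(2*(1+a^2))))^2 := by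
  have hb : (0:ℝ) < 1/2 + a^2/s^2 := by positivity
  have hA0 : (0:ℝ) < 1 + a^2 := by positivity
  have hcn0 : 0 < cn := by rw [hcn]; positivity
  simp_rw [kernel_pt hs0 z]
  rw [MeasureTheory.integral_const_mul]
  rw [my_integral_rexp hb (2*a/s^2) z]
  have hbA : 1/2 + a^2/s^2 = (1+a^2)/(2*s^2) := by
    field_simp
    linarith [hss]
  have hpib : π / (1/2 + a^2/s^2) = (2*π) * s^2 / (1+a^2) := by
    rw [hbA]
    field_simp
  have hEI : -‖z‖^2/s^2 + (2*a/s^2)^2 * ‖z‖^2 / (4*(1/2 + a^2/s^2))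
      = -‖z‖^2/(2*(1+a^2)) + -‖z‖^2/(2*(1+a^2)) := by
    rw [hbA, hss]
    have h1 : (1:ℝ) - a^2 ≠ 0 := by nlinarith
    field_simp
    ring
  have hsn : (0:ℝ) < s^n := by positivity
  have h2pi : (0:ℝ) < 2*π := by positivity
  have e3 : cn * (2*π)^((n:ℝ)/2) = 1 := by
    rw [hcn, ← Real.rpow_add h2pi, show (-(n:ℝ)/2 + (n:ℝ)/2) = 0 by ring, Real.rpow_zero]
  have hCI : cn^3 * (((s^n : ℝ))⁻¹)^2 * (π / (1/2 + a^2/s^2)) ^ ((n : ℝ)/2)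
      = cn^2 * ((s^2*(1+a^2)) ^ (-(n:ℝ)/4))^2 := by
    rw [hpib]
    have e1 : ((2*π) * s^2 / (1+a^2) : ℝ) ^ ((n : ℝ)/2)
        = (2*π) ^ ((n : ℝ)/2) * (s^n : ℝ) / (1+a^2) ^ ((n : ℝ)/2) := by
      rw [Real.div_rpow (by positivity) hA0.le, Real.mul_rpow h2pi.le (by positivity),
        hsq_rpow hs0.le]
      rw [show ((2:ℝ) * ((n:ℝ)/2)) = (n:ℝ) by ring, Real.rpow_natCast]
    have e2 : (((s^2*(1+a^2) : ℝ)) ^ (-(n:ℝ)/4))^2 = ((s^n : ℝ) * (1+a^2)^((n:ℝ)/2))⁻¹ := by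
      rw [sq, ← Real.rpow_add (by positivity)]
      rw [show (-(n:ℝ)/4 + -(n:ℝ)/4) = -((n:ℝ)/2) by ring]
      rw [Real.rpow_neg (by positivity)]
      rw [Real.mul_rpow (by positivity) hA0.le, hsq_rpow hs0.le]
      rw [show ((2:ℝ) * ((n:ℝ)/2)) = (n:ℝ) by ring, Real.rpow_natCast]
    rw [e1, e2]
    have hQ : (0:ℝ) < (1+a^2)^((n:ℝ)/2) := by positivity
    field_simp
    linear_combination e3
  calc cn ^ 3 * ((s^n : ℝ))⁻¹ ^ 2 * rexp (-‖z‖ ^ 2 / s ^ 2) *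
        ((π / (1/2 + a^2/s^2)) ^ ((n:ℝ)/2) *
          rexp ((2*a/s^2) ^ 2 * ‖z‖ ^ 2 / (4 * (1/2 + a^2/s^2))))
      = (cn^3 * (((s^n : ℝ))⁻¹)^2 * (π / (1/2 + a^2/s^2)) ^ ((n : ℝ)/2)) *
        (rexp (-‖z‖^2/s^2) * rexp ((2*a/s^2) ^ 2 * ‖z‖ ^ 2 / (4 * (1/2 + a^2/s^2)))) := by
        ring
    _ = (cn^2 * ((s^2*(1+a^2)) ^ (-(n:ℝ)/4))^2) *
        rexp (-‖z‖^2/(2*(1+a^2)) + -‖z‖^2/(2*(1+a^2))) := by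
        rw [← Real.exp_add, hEI, hCI]
    _ = (cn * (s^2*(1+a^2)) ^ (-(n:ℝ)/4) * rexp (-‖z‖^2/(2*(1+a^2))))^2 := by
        rw [Real.exp_add]
        ring

/-- Rewriting a Gaussian-measure lintegral as a volume lintegral against the density. -/
lemma gauss_lintegral (n : ℕ) {g : EuclideanSpace ℝ (Fin n) → ℝ≥0∞} (hg : Measurable g) :
    ∫⁻ x, g x ∂(gaussianMeasure n)
      = ∫⁻ x, ENNReal.ofReal ((2 * π) ^ (-(n : ℝ) / 2) * rexp (-‖x‖ ^ 2 / 2)) * g x := by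
  have hd : Measurable fun x : EuclideanSpace ℝ (Fin n) =>
      ENNReal.ofReal ((2 * π) ^ (-(n : ℝ) / 2) * rexp (-‖x‖ ^ 2 / 2)) := by
    apply ENNReal.measurable_ofReal.comp
    fun_prop
  rw [gaussianMeasure, lintegral_withDensity_eq_lintegral_mul _ hd hg]
  rfl

end Aux


section Step1

local notation "⟪" x ", " y "⟫" => @inner ℝ _ _ x y

lemma OU_pointwise_bound {n : ℕ} {f : EuclideanSpace ℝ (Fin n) → ℝ} (hf : Measurable f)
    {a s cn : ℝ} (hs0 : 0 < s) (hcn : cn = (2*π) ^ (-(n:ℝ)/2))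
    (x : EuclideanSpace ℝ (Fin n)) :
    (‖∫ y, f (a • x + s • y) ∂(gaussianMeasure n)‖₊ : ℝ≥0∞)
      ≤ ∫⁻ z, ↑‖f z‖₊ *
          ENNReal.ofReal (cn * ((s^n : ℝ))⁻¹ * rexp (-‖z - a • x‖^2/(2*s^2))) := by
  have hmap : Measurable fun y : EuclideanSpace ℝ (Fin n) => a • x + s • y :=
    (measurable_id.const_smul s).const_add (a • x)
  have hkc : Measurable fun z : EuclideanSpace ℝ (Fin n) =>
      cn * rexp (-‖z - a • x‖^2/(2*s^2)) := by fun_prop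
  have hφ : Measurable fun z : EuclideanSpace ℝ (Fin n) =>
      ENNReal.ofReal (cn * rexp (-‖z - a • x‖^2/(2*s^2))) * ↑‖f z‖₊ :=
    (ENNReal.measurable_ofReal.comp hkc).mul hf.nnnorm.coe_nnreal_ennreal
  have hpt : ∀ y, ENNReal.ofReal ((2 * π) ^ (-(n : ℝ) / 2) * rexp (-‖y‖ ^ 2 / 2)) *
        ↑‖f (a • x + s • y)‖₊
      = ENNReal.ofReal (cn * rexp (-‖(a • x + s • y) - a • x‖^2/(2*s^2))) *
        ↑‖f (a • x + s • y)‖₊ := by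
    intro y
    rw [hcn, add_sub_cancel_left, norm_smul]
    congr 3
    simp only [Real.norm_eq_abs, mul_pow, sq_abs]
    field_simp
  calc (‖∫ y, f (a • x + s • y) ∂(gaussianMeasure n)‖₊ : ℝ≥0∞)
      ≤ ∫⁻ y, ↑‖f (a • x + s • y)‖₊ ∂(gaussianMeasure n) :=
        enorm_integral_le_lintegral_enorm _
    _ = ∫⁻ y, ENNReal.ofReal ((2 * π) ^ (-(n : ℝ) / 2) * rexp (-‖y‖ ^ 2 / 2)) *
          ↑‖f (a • x + s • y)‖₊ := gauss_lintegral n (hf.comp hmap).nnnorm.coe_nnreal_ennreal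
    _ = ∫⁻ y, ENNReal.ofReal (cn * rexp (-‖(a • x + s • y) - a • x‖^2/(2*s^2))) *
          ↑‖f (a • x + s • y)‖₊ := lintegral_congr hpt
    _ = (ENNReal.ofReal (s^n))⁻¹ * ∫⁻ z,
          ENNReal.ofReal (cn * rexp (-‖z - a • x‖^2/(2*s^2))) * ↑‖f z‖₊ :=
        my_lintegral_comp_add_smul (a • x) hs0 hφ
    _ = ∫⁻ z, ↑‖f z‖₊ *
          ENNReal.ofReal (cn * ((s^n : ℝ))⁻¹ * rexp (-‖z - a • x‖^2/(2*s^2))) := by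
        rw [← lintegral_const_mul _ hφ]
        refine lintegral_congr fun z => ?_
        rw [← ENNReal.ofReal_inv_of_pos (by positivity : (0:ℝ) < s^n), ← mul_assoc,
          ← ENNReal.ofReal_mul (by positivity),
          show ((s^n : ℝ))⁻¹ * (cn * rexp (-‖z - a • x‖^2/(2*s^2)))
            = cn * ((s^n : ℝ))⁻¹ * rexp (-‖z - a • x‖^2/(2*s^2)) from by ring]
        ring

end Step1


section CS

lemma kernel_CS {n : ℕ} {a s cn : ℝ} (ha1 : a < 1) (hs0 : 0 < s) (hss : s^2 = 1 - a^2)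
    (hcn : cn = (2*π) ^ (-(n:ℝ)/2)) (z z' : EuclideanSpace ℝ (Fin n)) :
    ∫⁻ x, ENNReal.ofReal (cn * ((s^n : ℝ))⁻¹ * rexp (-‖z - a • x‖^2/(2*s^2))) *
        ENNReal.ofReal (cn * ((s^n : ℝ))⁻¹ * rexp (-‖z' - a • x‖^2/(2*s^2))) *
        ENNReal.ofReal (cn * rexp (-‖x‖^2/2))
      ≤ ENNReal.ofReal (cn * (s^2*(1+a^2)) ^ (-(n:ℝ)/4) * rexp (-‖z‖^2/(2*(1+a^2)))) *
        ENNReal.ofReal (cn * (s^2*(1+a^2)) ^ (-(n:ℝ)/4) * rexp (-‖z'‖^2/(2*(1+a^2)))) := by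
  have hcn0 : 0 < cn := by rw [hcn]; positivity
  set k : EuclideanSpace ℝ (Fin n) → EuclideanSpace ℝ (Fin n) → ℝ :=
    fun x w => cn * ((s^n : ℝ))⁻¹ * rexp (-‖w - a • x‖^2/(2*s^2)) with hk_def
  set δ : EuclideanSpace ℝ (Fin n) → ℝ≥0∞ :=
    fun x => ENNReal.ofReal (cn * rexp (-‖x‖^2/2)) with hδ_def
  have hk0 : ∀ x w, 0 < k x w := fun x w => by positivity
  have hδ0 : ∀ x, δ x ≠ 0 := fun x => by
    simp only [hδ_def, ne_eq, ENNReal.ofReal_eq_zero, not_le]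
    positivity
  have hδtop : ∀ x, δ x ≠ ⊤ := fun x => ENNReal.ofReal_ne_top
  have hδm : Measurable δ := ENNReal.measurable_ofReal.comp (by fun_prop)
  have hkm : ∀ w, Measurable fun x => ENNReal.ofReal (k x w) :=
    fun w => ENNReal.measurable_ofReal.comp (by fun_prop)
  set u : EuclideanSpace ℝ (Fin n) → ℝ≥0∞ :=
    fun x => ENNReal.ofReal (k x z) * (δ x) ^ (1/2 : ℝ) with hu_def
  set v : EuclideanSpace ℝ (Fin n) → ℝ≥0∞ :=
    fun x => ENNReal.ofReal (k x z') * (δ x) ^ (1/2 : ℝ) with hv_def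
  have hum : Measurable u := (hkm z).mul (hδm.pow_const _)
  have hvm : Measurable v := (hkm z').mul (hδm.pow_const _)
  have key : ∀ x, ENNReal.ofReal (k x z) * ENNReal.ofReal (k x z') * δ x = u x * v x := by
    intro x
    have h2 : (δ x) ^ (1/2 : ℝ) * (δ x) ^ (1/2 : ℝ) = δ x := by
      rw [← ENNReal.rpow_add _ _ (hδ0 x) (hδtop x)]
      norm_num
    rw [← h2, hu_def, hv_def]
    ring
  have hpq : Real.HolderConjugate 2 2 := ⟨by norm_num, by norm_num, by norm_num⟩
  have hsq : ∀ (w : EuclideanSpace ℝ (Fin n)) (g : EuclideanSpace ℝ (Fin n) → ℝ≥0∞),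
      (g = fun x => ENNReal.ofReal (k x w) * (δ x) ^ (1/2 : ℝ)) →
      ∫⁻ x, g x ^ (2:ℝ)
        = ENNReal.ofReal ((cn * (s^2*(1+a^2)) ^ (-(n:ℝ)/4) * rexp (-‖w‖^2/(2*(1+a^2))))^2) := by
    intro w g hg
    have hpt : ∀ x, g x ^ (2:ℝ)
        = ENNReal.ofReal ((k x w)^2 * (cn * rexp (-‖x‖^2/2))) := by
      intro x
      rw [hg]
      rw [ENNReal.mul_rpow_of_nonneg _ _ (by norm_num : (0:ℝ) ≤ 2)]
      rw [← ENNReal.rpow_mul (δ x), show ((1:ℝ)/2 * 2) = 1 by norm_num, ENNReal.rpow_one]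
      rw [ENNReal.ofReal_rpow_of_pos (hk0 x w), Real.rpow_two]
      rw [hδ_def, ← ENNReal.ofReal_mul (by positivity)]
    rw [lintegral_congr hpt]
    rw [← ofReal_integral_eq_lintegral_ofReal (kernel_L2_integrable hs0 w)
      (Filter.Eventually.of_forall fun x => by positivity)]
    rw [kernel_L2 ha1 hs0 hss hcn w]
  have h1 := ENNReal.lintegral_mul_le_Lp_mul_Lq volume hpq hum.aemeasurable hvm.aemeasurable
  simp only [Pi.mul_apply] at h1
  rw [lintegral_congr key]
  refine le_trans h1 ?_
  rw [hsq z u hu_def, hsq z' v hv_def]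
  have hw : ∀ r : ℝ, 0 ≤ r → (ENNReal.ofReal (r^2)) ^ ((1:ℝ)/2) = ENNReal.ofReal r := by
    intro r hr
    rw [ENNReal.ofReal_pow hr, ← ENNReal.rpow_natCast (ENNReal.ofReal r) 2,
      ← ENNReal.rpow_mul]
    norm_num
  rw [hw _ (by positivity), hw _ (by positivity)]

end CS


section Plumbing

open scoped ENNReal

lemma plumbing {α : Type*} [MeasureSpace α] [SigmaFinite (volume : Measure α)]
    (F : α → ℝ≥0∞) (K : α → α → ℝ≥0∞) (δ W : α → ℝ≥0∞)
    (hF : Measurable F) (hK : Measurable (Function.uncurry K)) (hδ : Measurable δ)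
    (hW : Measurable W)
    (hCS : ∀ z z', ∫⁻ x, K x z * K x z' * δ x ≤ W z * W z') :
    ∫⁻ x, δ x * ((∫⁻ z, F z * K x z) * (∫⁻ z, F z * K x z))
      ≤ (∫⁻ z, F z * W z) * (∫⁻ z, F z * W z) := by
  have hsec : ∀ x, Measurable fun z => F z * K x z := fun x =>
    hF.mul (hK.comp measurable_prodMk_left)
  have hKz : ∀ z, Measurable fun x => K x z := fun z =>
    hK.comp (measurable_id.prodMk measurable_const)
  have hGm : Measurable fun x => ∫⁻ z, F z * K x z :=
    Measurable.lintegral_prod_right' ((hF.comp measurable_snd).mul hK)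
  calc ∫⁻ x, δ x * ((∫⁻ z, F z * K x z) * (∫⁻ z, F z * K x z))
      = ∫⁻ x, ∫⁻ z, F z * K x z * (δ x * ∫⁻ z', F z' * K x z') := by
        refine lintegral_congr fun x => ?_
        rw [lintegral_mul_const _ (hsec x)]
        ring
    _ = ∫⁻ z, ∫⁻ x, F z * K x z * (δ x * ∫⁻ z', F z' * K x z') := by
        refine lintegral_lintegral_swap ?_
        exact (((hF.comp measurable_snd).mul hK).mul
          ((hδ.comp measurable_fst).mul (hGm.comp measurable_fst))).aemeasurable
    _ = ∫⁻ z, F z * ∫⁻ x, K x z * (δ x * ∫⁻ z', F z' * K x z') := by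
        refine lintegral_congr fun z => ?_
        rw [← lintegral_const_mul _ (show Measurable fun x => K x z * (δ x * ∫⁻ z', F z' * K x z') from (hKz z).mul (hδ.mul hGm))]
        exact lintegral_congr fun x => by ring
    _ = ∫⁻ z, F z * ∫⁻ x, ∫⁻ z', (K x z * δ x) * (F z' * K x z') := by
        refine lintegral_congr fun z => ?_
        congr 1
        refine lintegral_congr fun x => ?_
        rw [← mul_assoc, ← lintegral_const_mul _ (hsec x)]
    _ = ∫⁻ z, F z * ∫⁻ z', ∫⁻ x, (K x z * δ x) * (F z' * K x z') := by
        refine lintegral_congr fun z => ?_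
        congr 1
        refine lintegral_lintegral_swap ?_
        exact (((hK.comp (measurable_fst.prodMk measurable_const)).mul
          (hδ.comp measurable_fst)).mul
          ((hF.comp measurable_snd).mul hK)).aemeasurable
    _ = ∫⁻ z, F z * ∫⁻ z', F z' * ∫⁻ x, K x z * K x z' * δ x := by
        refine lintegral_congr fun z => ?_
        congr 1
        refine lintegral_congr fun z' => ?_
        rw [← lintegral_const_mul _ (show Measurable fun x => K x z * K x z' * δ x from ((hKz z).mul (hKz z')).mul hδ)]
        exact lintegral_congr fun x => by ring
    _ ≤ ∫⁻ z, F z * ∫⁻ z', F z' * (W z * W z') :=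
        lintegral_mono fun z => mul_le_mul_right
          (lintegral_mono fun z' => mul_le_mul_right (hCS z z') _) _
    _ = ∫⁻ z, (∫⁻ z', F z' * W z') * (F z * W z) := by
        refine lintegral_congr fun z => ?_
        have h : ∫⁻ z', F z' * (W z * W z') = ∫⁻ z', W z * (F z' * W z') :=
          lintegral_congr fun z' => by ring
        rw [h, lintegral_const_mul _ (show Measurable fun z' => F z' * W z' from hF.mul hW)]
        ring
    _ = (∫⁻ z', F z' * W z') * ∫⁻ z, F z * W z :=
        lintegral_const_mul _ (hF.mul hW)

end Plumbing

theorem OU_L2_weighted_L1_bound (n : ℕ) (hn : 1 ≤ n) (t : ℝ) (ht : 0 < t)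
    (f : EuclideanSpace ℝ (Fin n) → ℝ) (hf : Measurable f)
    (hint : Integrable (fun y => |f y| * Vweight n t y) (gaussianMeasure n)) :
    eLpNorm (OU n t f) 2 (gaussianMeasure n) ≤
      ENNReal.ofReal (∫ y, |f y| * Vweight n t y ∂(gaussianMeasure n)) := by
  -- abbreviations
  set a : ℝ := rexp (-t) with ha_def
  set s : ℝ := Real.sqrt (1 - rexp (-2*t)) with hs_def
  set cn : ℝ := (2*π) ^ (-(n:ℝ)/2) with hcn_def
  have ha0 : 0 < a := Real.exp_pos _
  have ha1 : a < 1 := by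
    rw [ha_def, ← Real.exp_zero]
    exact Real.exp_lt_exp.mpr (by linarith)
  have he2 : rexp (-2*t) = a^2 := by
    rw [ha_def, sq, ← Real.exp_add]
    congr 1
    ring
  have h1e2 : 0 < 1 - rexp (-2*t) := by
    rw [he2]
    nlinarith
  have hs0 : 0 < s := Real.sqrt_pos.mpr h1e2
  have hss : s^2 = 1 - a^2 := by rw [hs_def, sq_sqrt h1e2.le, he2]
  have hcn0 : 0 < cn := by rw [hcn_def]; positivity
  have h4 : 1 - rexp (-4*t) = s^2*(1+a^2) := by
    have h44 : rexp (-4*t) = rexp (-2*t) * rexp (-2*t) := by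
      rw [← Real.exp_add]
      congr 1
      ring
    rw [h44, he2, hss]
    ring
  have he2t : rexp (2*t) = (a^2)⁻¹ := by
    rw [← he2, ← Real.exp_neg]
    congr 1
    ring
  have hVpos : ∀ z, 0 < Vweight n t z := by
    intro z
    rw [Vweight]
    have h0 : 0 < 1 - rexp (-4*t) := by rw [h4]; positivity
    positivity
  have hVid : ∀ z : EuclideanSpace ℝ (Fin n),
      Vweight n t z * (cn * rexp (-‖z‖^2/2))
        = cn * (s^2*(1+a^2)) ^ (-(n:ℝ)/4) * rexp (-‖z‖^2/(2*(1+a^2))) := by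
    intro z
    rw [Vweight, h4, he2t]
    have hexp2 : ‖z‖^2/(2*(1+(a^2)⁻¹)) + -‖z‖^2/2 = -‖z‖^2/(2*(1+a^2)) := by
      have h1 : (0:ℝ) < 1+(a^2)⁻¹ := by positivity
      have h2 : (0:ℝ) < 1+a^2 := by positivity
      field_simp
      ring
    calc (s^2*(1+a^2)) ^ (-(n:ℝ)/4) * rexp (‖z‖^2/(2*(1+(a^2)⁻¹))) * (cn * rexp (-‖z‖^2/2))
        = cn * (s^2*(1+a^2)) ^ (-(n:ℝ)/4) *
            (rexp (‖z‖^2/(2*(1+(a^2)⁻¹))) * rexp (-‖z‖^2/2)) := by ring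
      _ = cn * (s^2*(1+a^2)) ^ (-(n:ℝ)/4) * rexp (‖z‖^2/(2*(1+(a^2)⁻¹)) + -‖z‖^2/2) := by
          rw [Real.exp_add]
      _ = cn * (s^2*(1+a^2)) ^ (-(n:ℝ)/4) * rexp (-‖z‖^2/(2*(1+a^2))) := by rw [hexp2]
  -- measurable pieces
  have hFm : Measurable fun z : EuclideanSpace ℝ (Fin n) => (‖f z‖₊ : ℝ≥0∞) := hf.nnnorm.coe_nnreal_ennreal
  have hKm : Measurable (Function.uncurry fun x z : EuclideanSpace ℝ (Fin n) =>
      ENNReal.ofReal (cn * ((s^n : ℝ))⁻¹ * rexp (-‖z - a • x‖^2/(2*s^2)))) := by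
    have hraw : Continuous fun p : EuclideanSpace ℝ (Fin n) × EuclideanSpace ℝ (Fin n) =>
        cn * ((s^n : ℝ))⁻¹ * rexp (-‖p.2 - a • p.1‖^2/(2*s^2)) := by fun_prop
    exact ENNReal.measurable_ofReal.comp hraw.measurable
  have hδm : Measurable fun x : EuclideanSpace ℝ (Fin n) =>
      ENNReal.ofReal (cn * rexp (-‖x‖^2/2)) :=
    ENNReal.measurable_ofReal.comp (by fun_prop)
  have hWm : Measurable fun z : EuclideanSpace ℝ (Fin n) =>
      ENNReal.ofReal (cn * (s^2*(1+a^2)) ^ (-(n:ℝ)/4) * rexp (-‖z‖^2/(2*(1+a^2)))) :=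
    ENNReal.measurable_ofReal.comp (by fun_prop)
  have hGm : Measurable fun x : EuclideanSpace ℝ (Fin n) => ∫⁻ z, (‖f z‖₊ : ℝ≥0∞) *
      ENNReal.ofReal (cn * ((s^n : ℝ))⁻¹ * rexp (-‖z - a • x‖^2/(2*s^2))) :=
    Measurable.lintegral_prod_right' ((hFm.comp measurable_snd).mul hKm)
  -- step 3 : pointwise bound on OU
  have step3 : ∀ x, (‖OU n t f x‖₊ : ℝ≥0∞) ≤ ∫⁻ z, (‖f z‖₊ : ℝ≥0∞) *
      ENNReal.ofReal (cn * ((s^n : ℝ))⁻¹ * rexp (-‖z - a • x‖^2/(2*s^2))) := by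
    intro x
    have hOU : OU n t f x = ∫ y, f (a • x + s • y) ∂(gaussianMeasure n) := by
      rw [OU, ← ha_def, ← hs_def]
    rw [hOU]
    exact OU_pointwise_bound hf hs0 hcn_def x
  -- step 5 : pass to the volume integral
  have step5 : ∫⁻ x, (∫⁻ z, (‖f z‖₊ : ℝ≥0∞) *
        ENNReal.ofReal (cn * ((s^n : ℝ))⁻¹ * rexp (-‖z - a • x‖^2/(2*s^2)))) ^ (2:ℝ)
        ∂(gaussianMeasure n)
      = ∫⁻ x, ENNReal.ofReal (cn * rexp (-‖x‖^2/2)) *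
          ((∫⁻ z, (‖f z‖₊ : ℝ≥0∞) *
            ENNReal.ofReal (cn * ((s^n : ℝ))⁻¹ * rexp (-‖z - a • x‖^2/(2*s^2)))) *
           (∫⁻ z, (‖f z‖₊ : ℝ≥0∞) *
            ENNReal.ofReal (cn * ((s^n : ℝ))⁻¹ * rexp (-‖z - a • x‖^2/(2*s^2))))) := by
    rw [gauss_lintegral n (hGm.pow_const _)]
    refine lintegral_congr fun x => ?_
    rw [← hcn_def, ENNReal.rpow_two]
    ring
  -- the key bilinear bound
  have key : ∫⁻ x, ENNReal.ofReal (cn * rexp (-‖x‖^2/2)) *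
          ((∫⁻ z, (‖f z‖₊ : ℝ≥0∞) *
            ENNReal.ofReal (cn * ((s^n : ℝ))⁻¹ * rexp (-‖z - a • x‖^2/(2*s^2)))) *
           (∫⁻ z, (‖f z‖₊ : ℝ≥0∞) *
            ENNReal.ofReal (cn * ((s^n : ℝ))⁻¹ * rexp (-‖z - a • x‖^2/(2*s^2)))))
      ≤ (∫⁻ z, (‖f z‖₊ : ℝ≥0∞) *
            ENNReal.ofReal (cn * (s^2*(1+a^2)) ^ (-(n:ℝ)/4) * rexp (-‖z‖^2/(2*(1+a^2))))) *
        (∫⁻ z, (‖f z‖₊ : ℝ≥0∞) *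
            ENNReal.ofReal (cn * (s^2*(1+a^2)) ^ (-(n:ℝ)/4) * rexp (-‖z‖^2/(2*(1+a^2))))) :=
    plumbing _ _ _ _ hFm hKm hδm hWm (fun z z' => kernel_CS ha1 hs0 hss hcn_def z z')
  -- identification of the weight integral
  have step9 : (∫⁻ z, (‖f z‖₊ : ℝ≥0∞) *
        ENNReal.ofReal (cn * (s^2*(1+a^2)) ^ (-(n:ℝ)/4) * rexp (-‖z‖^2/(2*(1+a^2)))))
      = ENNReal.ofReal (∫ y, |f y| * Vweight n t y ∂(gaussianMeasure n)) := by
    rw [ofReal_integral_eq_lintegral_ofReal hint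
      (Filter.Eventually.of_forall fun y => mul_nonneg (abs_nonneg _) (hVpos y).le)]
    have hVm : Measurable (Vweight n t) := by
      have hc : Continuous fun y : EuclideanSpace ℝ (Fin n) =>
          (1 - rexp (-4*t)) ^ (-(n:ℝ)/4) * rexp (‖y‖^2/(2*(1+rexp (2*t)))) := by fun_prop
      exact hc.measurable
    rw [gauss_lintegral n (g := fun y => ENNReal.ofReal (|f y| * Vweight n t y))
      (ENNReal.measurable_ofReal.comp (hf.abs.mul hVm))]
    refine lintegral_congr fun y => ?_
    rw [← hcn_def, ← hVid y, ← enorm_eq_nnnorm, Real.enorm_eq_ofReal_abs]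
    rw [← ENNReal.ofReal_mul (abs_nonneg _)]
    rw [← ENNReal.ofReal_mul (mul_nonneg hcn0.le (Real.exp_nonneg _))]
    congr 1
    ring
  -- final assembly
  have step2 : eLpNorm (OU n t f) 2 (gaussianMeasure n)
      = (∫⁻ x, (‖OU n t f x‖₊ : ℝ≥0∞) ^ (2:ℝ) ∂(gaussianMeasure n)) ^ ((1:ℝ)/2) := by
    rw [eLpNorm_eq_lintegral_rpow_enorm_toReal (by norm_num) (by norm_num)]
    norm_num
    rfl
  set R : ℝ≥0∞ := ENNReal.ofReal (∫ y, |f y| * Vweight n t y ∂(gaussianMeasure n)) with hR_def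
  have hfinal : ∫⁻ x, (‖OU n t f x‖₊ : ℝ≥0∞) ^ (2:ℝ) ∂(gaussianMeasure n) ≤ R * R := by
    refine le_trans (lintegral_mono fun x =>
      ENNReal.rpow_le_rpow (step3 x) (by norm_num : (0:ℝ) ≤ 2)) ?_
    rw [step5]
    rw [step9] at key
    exact key
  rw [step2]
  calc (∫⁻ x, (‖OU n t f x‖₊ : ℝ≥0∞) ^ (2:ℝ) ∂(gaussianMeasure n)) ^ ((1:ℝ)/2)
      ≤ (R * R) ^ ((1:ℝ)/2) := ENNReal.rpow_le_rpow hfinal (by norm_num)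
    _ = R := by
        rw [← sq, ← ENNReal.rpow_natCast R 2, ← ENNReal.rpow_mul]
        norm_num
end

section
/- Let (E, μ) be a σ-finite measure space, let k : E × E → [0,∞) be measurable and symmetric (k(x,y) = k(y,x)) with ∫ k(x,y) dμ(y) = 1 for μ-almost every x, and let V : E → (0,∞) be measurable. Define Kf(x) = ∫ k(x,y) f(y) dμ(y). Assume that ‖Kf‖_{L²(μ)} ≤ ∫ |f| V dμ for every measurable f with ∫ |f| V dμ < ∞. Then the kernel of K∘K, namely k₂(x,y) = ∫ k(x,z) k(z,y) dμ(z), satisfies k₂(x,y) ≤ V(x) V(y) for μ⊗μ-almost every (x,y). -/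
open MeasureTheory Set MeasurableSpace
open scoped ENNReal symmDiff

lemma prod_mono_right {α β : Type*} (mα : MeasurableSpace α) {m m' : MeasurableSpace β}
    (h : m ≤ m') : mα.prod m ≤ mα.prod m' :=
  sup_le_sup le_rfl (MeasurableSpace.comap_mono h)

/-- every product-measurable ennreal function is measurable w.r.t. a product with
a countably generated sub-sigma-algebra on the second factor -/
lemma exists_cg_snd {α β : Type*} [mα : MeasurableSpace α] [mβ : MeasurableSpace β]
    (W : α × β → ENNReal) (hW : Measurable W) :
    ∃ m₂ : {m : MeasurableSpace β // m ≤ mβ}, @CountablyGenerated β m₂.1 ∧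
      @Measurable _ _ (mα.prod m₂.1) _ W := by
  classical
  set M : MeasurableSpace (α × β) :=
    { MeasurableSet' := fun S => ∃ 𝔊 : Set (Set β), 𝔊.Countable ∧ (∀ B ∈ 𝔊, MeasurableSet B) ∧
        MeasurableSet[mα.prod (generateFrom 𝔊)] S
      measurableSet_empty := ⟨∅, countable_empty, by simp,
        @MeasurableSet.empty _ (mα.prod (generateFrom (∅ : Set (Set β))))⟩
      measurableSet_compl := by
        rintro S ⟨𝔊, h1, h2, h3⟩
        exact ⟨𝔊, h1, h2, h3.compl⟩
      measurableSet_iUnion := by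
        intro f hf
        choose 𝔊 h1 h2 h3 using hf
        refine ⟨⋃ n, 𝔊 n, countable_iUnion h1, ?_, ?_⟩
        · rintro B hB
          rw [mem_iUnion] at hB
          obtain ⟨n, hn⟩ := hB
          exact h2 n B hn
        · refine MeasurableSet.iUnion fun n => ?_
          exact prod_mono_right mα (generateFrom_mono (subset_iUnion 𝔊 n)) _ (h3 n) } with hM
  have hle : (Prod.instMeasurableSpace : MeasurableSpace (α × β)) ≤ M := by
    rw [show (Prod.instMeasurableSpace : MeasurableSpace (α × β)) = mα.prod mβ from rfl]
    refine sup_le ?_ ?_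
    · rw [← measurable_iff_comap_le]
      intro A hA
      exact ⟨∅, countable_empty, by simp,
        (@measurable_fst α β mα (generateFrom ∅)) hA⟩
    · rw [← measurable_iff_comap_le]
      intro B hB
      refine ⟨{B}, countable_singleton B, by simpa using hB, ?_⟩
      exact (@measurable_snd α β mα (generateFrom {B})) (measurableSet_generateFrom rfl)
  have hlevel : ∀ q : ℚ, ∃ 𝔊 : Set (Set β), 𝔊.Countable ∧ (∀ B ∈ 𝔊, MeasurableSet B) ∧
      MeasurableSet[mα.prod (generateFrom 𝔊)] {p | ENNReal.ofReal q < W p} := by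
    intro q
    exact hle _ (hW measurableSet_Ioi)
  choose 𝔊 h1 h2 h3 using hlevel
  refine ⟨⟨generateFrom (⋃ q, 𝔊 q), generateFrom_le (by
      rintro B hB
      rw [mem_iUnion] at hB
      obtain ⟨q, hq⟩ := hB
      exact h2 q B hq)⟩, ?_, ?_⟩
  · exact @CountablyGenerated.mk β (generateFrom (⋃ q, 𝔊 q))
      ⟨⋃ q, 𝔊 q, countable_iUnion h1, rfl⟩
  · have hlev : ∀ q : ℚ, MeasurableSet[mα.prod (generateFrom (⋃ q, 𝔊 q))]
        {p | ENNReal.ofReal q < W p} := fun q =>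
      prod_mono_right mα (generateFrom_mono (subset_iUnion 𝔊 q)) _ (h3 q)
    refine measurable_of_Ioi fun x => ?_
    have : W ⁻¹' (Ioi x) = ⋃ (q : ℚ) (_ : x < ENNReal.ofReal q),
        {p | ENNReal.ofReal q < W p} := by
      ext p
      simp only [mem_preimage, mem_Ioi, mem_iUnion, mem_setOf_eq]
      constructor
      · intro h
        obtain ⟨q, _, h1', h2'⟩ := ENNReal.lt_iff_exists_rat_btwn.1 h
        exact ⟨q, h1', h2'⟩
      · rintro ⟨q, h1', h2'⟩
        exact h1'.trans h2'
    rw [this]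
    exact MeasurableSet.iUnion fun q => MeasurableSet.iUnion fun _ => hlev q

lemma lemB {α : Type*} [mα : MeasurableSpace α] (ρ : Measure α) [SigmaFinite ρ]
    (m₂ : {m : MeasurableSpace α // m ≤ mα}) (hcg : @CountablyGenerated α m₂.1)
    (u : α → ℝ≥0∞) (hu : @Measurable _ _ m₂.1 _ u)
    (c : ℝ≥0∞) (hc : c ≠ ∞)
    (h : ∀ B ∈ generateSetAlgebra (@countableGeneratingSet α m₂.1 hcg), ∀ j : ℕ,
       ∫⁻ y in B ∩ spanningSets ρ j, u y ∂ρ ≤ c * ρ (B ∩ spanningSets ρ j)) :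
    ∀ᵐ y ∂ρ, u y ≤ c := by
  classical
  obtain ⟨hle⟩ : Nonempty (m₂.1 ≤ mα) := ⟨m₂.2⟩
  set 𝔅 : Set (Set α) := generateSetAlgebra (@countableGeneratingSet α m₂.1 hcg) with h𝔅
  have halg : IsSetAlgebra 𝔅 := isSetAlgebra_generateSetAlgebra
  have hgen : m₂.1 = generateFrom 𝔅 := by
    rw [h𝔅, generateFrom_generateSetAlgebra_eq,
      @generateFrom_countableGeneratingSet α m₂.1 hcg]
  have hmem₂ : ∀ B ∈ 𝔅, MeasurableSet[m₂.1] B := by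
    intro B hB
    rw [hgen]
    exact measurableSet_generateFrom hB
  have hu' : Measurable u := hu.mono hle le_rfl
  have key : ∀ j : ℕ, ∀ t, MeasurableSet[m₂.1] t →
      ∫⁻ y in t, u y ∂(ρ.restrict (spanningSets ρ j)) ≤
        c * (ρ.restrict (spanningSets ρ j)) t := by
    intro j t ht
    have htm : MeasurableSet t := hle _ ht
    set ρj := ρ.restrict (spanningSets ρ j) with hρj
    have hEj : MeasurableSet (spanningSets ρ j) := measurableSet_spanningSets ρ j
    have hρjfin : ρj univ < ∞ := by
      rw [hρj, Measure.restrict_apply_univ]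
      exact measure_spanningSets_lt_top ρ j
    have hBval : ∀ B, MeasurableSet B →
        ∫⁻ y in B, u y ∂ρj = ∫⁻ y in B ∩ spanningSets ρ j, u y ∂ρ := by
      intro B hB
      rw [hρj, Measure.restrict_restrict hB]
    have hBval' : ∀ B, MeasurableSet B → ρj B = ρ (B ∩ spanningSets ρ j) := by
      intro B hB
      rw [hρj, Measure.restrict_apply hB]
    set β₁ : Measure α := ρj.withDensity u with hβ₁
    set β₂ : Measure α := c • ρj with hβ₂
    have hβ₁app : ∀ B, MeasurableSet B → β₁ B = ∫⁻ y in B, u y ∂ρj := fun B hB =>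
      withDensity_apply u hB
    have hβ₂app : ∀ B, β₂ B = c * ρj B := fun B => rfl
    have hβ𝔅 : ∀ B ∈ 𝔅, β₁ B ≤ β₂ B := by
      intro B hB
      have hBm : MeasurableSet B := hle _ (hmem₂ B hB)
      rw [hβ₁app B hBm, hβ₂app, hBval B hBm, hBval' B hBm]
      exact h B hB j
    have hβ₁fin : β₁ univ < ∞ := by
      have := hβ𝔅 univ halg.univ_mem
      rw [hβ₂app] at this
      exact lt_of_le_of_lt this (ENNReal.mul_lt_top hc.lt_top hρjfin)
    have hβ₂fin : β₂ univ < ∞ := by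
      rw [hβ₂app]; exact ENNReal.mul_lt_top hc.lt_top hρjfin
    set θ : Measure α := β₁ + β₂ with hθ
    have hθfin : θ univ < ∞ := by
      rw [hθ]
      simp only [Measure.add_apply]
      exact ENNReal.add_lt_top.2 ⟨hβ₁fin, hβ₂fin⟩
    set θt : @Measure α m₂.1 := @Measure.trim α m₂.1 mα θ hle with hθt
    haveI hfinθt : @IsFiniteMeasure α m₂.1 θt := by
      refine @IsFiniteMeasure.mk α m₂.1 θt ?_
      rw [hθt, trim_measurableSet_eq hle MeasurableSet.univ]
      exact hθfin
    have hdense := @Measure.MeasureDense.of_generateFrom_isSetAlgebra_finite α m₂.1 θt 𝔅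
      hfinθt halg hgen
    rw [← hβ₁app t htm, ← hβ₂app t]
    apply ENNReal.le_of_forall_pos_le_add
    intro ε hε hfin
    have hθtne : θt t ≠ ⊤ := by
      rw [hθt, trim_measurableSet_eq hle ht]
      exact (lt_of_le_of_lt (measure_mono (subset_univ t)) hθfin).ne
    obtain ⟨s, hs𝔅, hsapp⟩ := @Measure.MeasureDense.approx α m₂.1 θt 𝔅 hdense t ht hθtne
      ((ε : ℝ)/2) (by positivity)
    have hsm₂ : MeasurableSet[m₂.1] s := hmem₂ s hs𝔅
    have hsm : MeasurableSet s := hle _ hsm₂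
    have hΔ : θ (t ∆ s) < ENNReal.ofReal ((ε : ℝ)/2) := by
      rw [← trim_measurableSet_eq hle (ht.symmDiff hsm₂)]
      exact hsapp
    have hsub1 : t ⊆ s ∪ (t ∆ s) := by
      intro y hy
      by_cases hys : y ∈ s
      · exact Or.inl hys
      · exact Or.inr (Or.inl ⟨hy, hys⟩)
    have hsub2 : s ⊆ t ∪ (t ∆ s) := by
      intro y hy
      by_cases hyt : y ∈ t
      · exact Or.inl hyt
      · exact Or.inr (Or.inr ⟨hy, hyt⟩)
    have hβ₁θ : β₁ (t ∆ s) ≤ θ (t ∆ s) := by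
      rw [hθ]; exact Measure.le_iff'.1 (Measure.le_add_right le_rfl) _
    have hβ₂θ : β₂ (t ∆ s) ≤ θ (t ∆ s) := by
      rw [hθ]; exact Measure.le_iff'.1 (Measure.le_add_left le_rfl) _
    calc β₁ t ≤ β₁ s + β₁ (t ∆ s) :=
          le_trans (measure_mono hsub1) (measure_union_le _ _)
      _ ≤ β₂ s + ENNReal.ofReal ((ε : ℝ)/2) :=
          add_le_add (hβ𝔅 s hs𝔅) (le_trans hβ₁θ hΔ.le)
      _ ≤ (β₂ t + β₂ (t ∆ s)) + ENNReal.ofReal ((ε : ℝ)/2) :=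
          add_le_add_left (le_trans (measure_mono hsub2) (measure_union_le _ _)) _
      _ ≤ (β₂ t + ENNReal.ofReal ((ε : ℝ)/2)) + ENNReal.ofReal ((ε : ℝ)/2) :=
          add_le_add_left (add_le_add_right (le_trans hβ₂θ hΔ.le) _) _
      _ ≤ β₂ t + ε := by
          rw [add_assoc]
          refine add_le_add_right ?_ _
          rw [← ENNReal.ofReal_add (by positivity) (by positivity),
            show (ε:ℝ)/2 + (ε:ℝ)/2 = (ε:ℝ) by ring]
          exact le_of_eq ENNReal.ofReal_coe_nnreal
  -- level sets are null on each spanning set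
  have hlevel : ∀ j n : ℕ,
      ρ.restrict (spanningSets ρ j) {y | c + ((n : ℝ≥0∞)+1)⁻¹ ≤ u y} = 0 := by
    intro j n
    set δ : ℝ≥0∞ := ((n : ℝ≥0∞)+1)⁻¹ with hδ
    have hδ0 : δ ≠ 0 := by
      rw [hδ]
      exact ENNReal.inv_ne_zero.2 (by simp)
    set tn := {y | c + δ ≤ u y} with htn
    have htnm₂ : MeasurableSet[m₂.1] tn := hu measurableSet_Ici
    have h1 : (c + δ) * (ρ.restrict (spanningSets ρ j)) tn ≤
        c * (ρ.restrict (spanningSets ρ j)) tn := by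
      refine le_trans ?_ (key j tn htnm₂)
      rw [← setLIntegral_const tn (c+δ)]
      exact setLIntegral_mono hu' (fun y hy => hy)
    by_contra h0
    have hfin : (ρ.restrict (spanningSets ρ j)) tn ≠ ∞ := by
      refine (lt_of_le_of_lt (measure_mono (subset_univ tn)) ?_).ne
      rw [Measure.restrict_apply_univ]
      exact measure_spanningSets_lt_top ρ j
    have h2 : c + δ ≤ c := (ENNReal.mul_le_mul_iff_left h0 hfin).1 h1
    have h3 : δ ≤ 0 := by
      have := h2.trans_eq (add_zero c).symm
      exact (WithTop.add_le_add_iff_left hc).1 this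
    exact hδ0 (le_zero_iff.1 h3)
  -- conclusion
  set N := {y | c < u y} with hN
  have hNm : MeasurableSet N := hle _ (hu measurableSet_Ioi)
  have hNcup : N = ⋃ n : ℕ, {y | c + ((n : ℝ≥0∞)+1)⁻¹ ≤ u y} := by
    ext y
    simp only [hN, mem_setOf_eq, mem_iUnion]
    constructor
    · intro hy
      have hcy : c ≤ u y := hy.le
      have hd0 : u y - c ≠ 0 := by
        rw [ne_eq, tsub_eq_zero_iff_le, not_le]
        exact hy
      obtain ⟨n, hn⟩ := ENNReal.exists_inv_nat_lt hd0
      refine ⟨n, ?_⟩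
      have h4 : ((n : ℝ≥0∞)+1)⁻¹ ≤ ((n : ℝ≥0∞))⁻¹ :=
        ENNReal.inv_le_inv' le_self_add
      calc c + ((n : ℝ≥0∞)+1)⁻¹ ≤ c + (u y - c) :=
            add_le_add_right (le_trans h4 hn.le) c
        _ = u y := add_tsub_cancel_of_le hcy
    · rintro ⟨n, hn⟩
      have : c < c + ((n : ℝ≥0∞)+1)⁻¹ :=
        ENNReal.lt_add_right hc (by
          exact ENNReal.inv_ne_zero.2 (by simp))
      exact this.trans_le hn
  have hNnull : ρ N = 0 := by
    have hNj : ∀ j : ℕ, ρ (N ∩ spanningSets ρ j) = 0 := by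
      intro j
      rw [← Measure.restrict_apply hNm, hNcup]
      exact measure_iUnion_null fun n => hlevel j n
    have hsub : N ⊆ ⋃ j : ℕ, (N ∩ spanningSets ρ j) := by
      intro y hy
      have : y ∈ ⋃ j, spanningSets ρ j := by
        rw [iUnion_spanningSets]; trivial
      rw [mem_iUnion] at this ⊢
      obtain ⟨j, hj⟩ := this
      exact ⟨j, hy, hj⟩
    exact le_antisymm (le_trans (measure_mono hsub) (le_of_eq (measure_iUnion_null hNj)))
      (zero_le)
  rw [ae_iff]
  convert hNnull using 2
  ext y
  simp [hN, not_le]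

lemma coreLemma {α β : Type*} [mα : MeasurableSpace α] [mβ : MeasurableSpace β]
    (ρ : Measure α) (ρ' : Measure β) [SigmaFinite ρ] [SigmaFinite ρ']
    (W : α × β → ℝ≥0∞) (hW : Measurable W) (c : ℝ≥0∞) (hc : c ≠ ∞)
    (h : ∀ A B, MeasurableSet A → MeasurableSet B → ρ A < ∞ → ρ' B < ∞ →
      ∫⁻ p in A ×ˢ B, W p ∂(ρ.prod ρ') ≤ c * (ρ A * ρ' B)) :
    ∀ᵐ p ∂(ρ.prod ρ'), W p ≤ c := by
  classical
  obtain ⟨m₂, hcg, hWm₂⟩ := exists_cg_snd W hW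
  set 𝔅 : Set (Set β) := generateSetAlgebra (@countableGeneratingSet β m₂.1 hcg) with h𝔅
  have h𝔅count : 𝔅.Countable :=
    countable_generateSetAlgebra (@countable_countableGeneratingSet β m₂.1 hcg)
  have hgen : m₂.1 = MeasurableSpace.generateFrom 𝔅 := by
    rw [h𝔅, generateFrom_generateSetAlgebra_eq,
      @generateFrom_countableGeneratingSet β m₂.1 hcg]
  have hmem₂ : ∀ B ∈ 𝔅, MeasurableSet[m₂.1] B := by
    intro B hB
    rw [hgen]
    exact measurableSet_generateFrom hB
  have hmemβ : ∀ B ∈ 𝔅, MeasurableSet B := fun B hB => m₂.2 _ (hmem₂ B hB)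
  -- step (b): for each test set, a.e. fibrewise bound
  have step1 : ∀ B ∈ 𝔅, ∀ j : ℕ, ∀ᵐ x ∂ρ,
      ∫⁻ y in B ∩ spanningSets ρ' j, W (x, y) ∂ρ' ≤ c * ρ' (B ∩ spanningSets ρ' j) := by
    intro B hB j
    set Bj := B ∩ spanningSets ρ' j with hBj
    have hBjm : MeasurableSet Bj := (hmemβ B hB).inter (measurableSet_spanningSets ρ' j)
    have hBjfin : ρ' Bj < ∞ :=
      lt_of_le_of_lt (measure_mono inter_subset_right) (measure_spanningSets_lt_top ρ' j)
    have hg : Measurable fun x => ∫⁻ y in Bj, W (x, y) ∂ρ' :=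
      Measurable.lintegral_prod_right hW
    have := ae_le_of_forall_setLIntegral_le_of_sigmaFinite (μ := ρ)
      (g := fun _ => c * ρ' Bj) hg ?_
    · filter_upwards [this] with x hx using hx
    · intro s hs hsfin
      have heq : ∫⁻ x in s, (∫⁻ y in Bj, W (x, y) ∂ρ') ∂ρ =
          ∫⁻ p in s ×ˢ Bj, W p ∂(ρ.prod ρ') := by
        rw [← Measure.prod_restrict]
        exact (lintegral_prod W hW.aemeasurable).symm
      rw [heq, setLIntegral_const]
      calc ∫⁻ p in s ×ˢ Bj, W p ∂(ρ.prod ρ') ≤ c * (ρ s * ρ' Bj) :=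
            h s Bj hs hBjm hsfin hBjfin
        _ = c * ρ' Bj * ρ s := by ring
  have step2 : ∀ᵐ x ∂ρ, ∀ B ∈ 𝔅, ∀ j : ℕ,
      ∫⁻ y in B ∩ spanningSets ρ' j, W (x, y) ∂ρ' ≤ c * ρ' (B ∩ spanningSets ρ' j) := by
    rw [ae_ball_iff h𝔅count]
    intro B hB
    rw [ae_all_iff]
    exact step1 B hB
  have step3 : ∀ᵐ x ∂ρ, ∀ᵐ y ∂ρ', W (x, y) ≤ c := by
    filter_upwards [step2] with x hx
    have hu : @Measurable _ _ m₂.1 _ (fun y => W (x, y)) :=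
      hWm₂.comp (@measurable_prodMk_left α β mα m₂.1 x)
    exact lemB ρ' m₂ hcg (fun y => W (x, y)) hu c hc (fun B hB j => hx B hB j)
  -- conclude on the product
  have hSm : MeasurableSet {p : α × β | c < W p} := hW measurableSet_Ioi
  rw [ae_iff]
  have : {p : α × β | ¬ W p ≤ c} = {p : α × β | c < W p} := by
    ext p; simp [not_le]
  rw [this, Measure.prod_apply hSm]
  have hzero : ∀ᵐ x ∂ρ, ρ' (Prod.mk x ⁻¹' {p : α × β | c < W p}) = 0 := by
    filter_upwards [step3] with x hx
    have : (Prod.mk x ⁻¹' {p : α × β | c < W p}) = {y | ¬ W (x, y) ≤ c} := by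
      ext y; simp [not_le]
    rw [this]
    exact ae_iff.mp hx
  calc ∫⁻ x, ρ' (Prod.mk x ⁻¹' {p : α × β | c < W p}) ∂ρ = ∫⁻ _, 0 ∂ρ :=
        lintegral_congr_ae hzero
    _ = 0 := lintegral_zero

theorem kernel_square_bound_of_weighted_L1_L2
    {E : Type*} [MeasurableSpace E] (μ : Measure E) [SigmaFinite μ]
    (k : E → E → ℝ) (hk_meas : Measurable (Function.uncurry k))
    (hk_nonneg : ∀ x y, 0 ≤ k x y)
    (hk_symm : ∀ x y, k x y = k y x)
    (hk_markov : ∀ᵐ x ∂μ, ∫ y, k x y ∂μ = 1)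
    (V : E → ℝ) (hV_meas : Measurable V) (hV_pos : ∀ x, 0 < V x)
    (hK : ∀ f : E → ℝ, Measurable f → Integrable (fun x => |f x| * V x) μ →
      eLpNorm (fun x => ∫ y, k x y * f y ∂μ) 2 μ ≤
        ENNReal.ofReal (∫ x, |f x| * V x ∂μ)) :
    ∀ᵐ p ∂(μ.prod μ), ∫ z, k p.1 z * k z p.2 ∂μ ≤ V p.1 * V p.2 := by
  classical
  set l : E → E → ℝ≥0∞ := fun x z => ENNReal.ofReal (k x z) with hl
  have hl_meas : Measurable (Function.uncurry l) :=
    ENNReal.measurable_ofReal.comp hk_meas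
  have hl_meas_left : ∀ x, Measurable (l x) := fun x =>
    hl_meas.comp measurable_prodMk_left
  have hl_meas_right : ∀ y, Measurable (fun x => l x y) := fun y =>
    hl_meas.comp (measurable_id.prodMk measurable_const)
  set κ : E × E → ℝ≥0∞ := fun p => ∫⁻ z, l p.1 z * l z p.2 ∂μ with hκ
  have hκ_meas : Measurable κ := by
    have hF : Measurable (fun q : (E × E) × E => l q.1.1 q.2 * l q.2 q.1.2) :=
      (hl_meas.comp ((measurable_fst.comp measurable_fst).prodMk measurable_snd)).mul
        (hl_meas.comp (measurable_snd.prodMk (measurable_snd.comp measurable_fst)))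
    exact Measurable.lintegral_prod_right hF
  -- Markov property in ℝ≥0∞ form
  have hmark : ∀ᵐ z ∂μ, (Integrable (fun y => k z y) μ) ∧ ∫⁻ y, l z y ∂μ = 1 := by
    filter_upwards [hk_markov] with z hz
    have hnn : 0 ≤ᵐ[μ] fun y => k z y := Filter.Eventually.of_forall (hk_nonneg z)
    have hint : Integrable (fun y => k z y) μ := by
      by_contra hni
      rw [integral_undef hni] at hz
      exact one_ne_zero hz.symm
    refine ⟨hint, ?_⟩
    rw [← ofReal_integral_eq_lintegral_ofReal hint hnn, hz, ENNReal.ofReal_one]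
  -- the L² bound for indicator test functions
  have hLp : ∀ A : Set E, MeasurableSet A → Integrable (A.indicator V) μ →
      (∫⁻ z, (∫⁻ x in A, l z x ∂μ) ^ (2:ℝ) ∂μ) ^ ((1:ℝ)/2) ≤
        ENNReal.ofReal (∫ x in A, V x ∂μ) := by
    intro A hA hAint
    set f : E → ℝ := A.indicator (fun _ => (1:ℝ)) with hf
    have hfm : Measurable f := measurable_const.indicator hA
    have hfV : (fun x => |f x| * V x) = A.indicator V := by
      funext x
      by_cases hx : x ∈ A <;> simp [hf, indicator, hx]
    have hKf := hK f hfm (by rw [hfV]; exact hAint)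
    rw [hfV] at hKf
    have hintV : ∫ x, A.indicator V x ∂μ = ∫ x in A, V x ∂μ := integral_indicator hA
    rw [hintV] at hKf
    refine le_trans (le_of_eq ?_) hKf
    rw [eLpNorm_eq_lintegral_rpow_enorm_toReal (by norm_num) (by norm_num)]
    have h2 : ((2:ℝ≥0∞).toReal) = (2:ℝ) := by norm_num
    rw [h2]
    congr 1
    apply lintegral_congr_ae
    filter_upwards [hmark] with z hz
    have hQle : (∫⁻ x in A, l z x ∂μ) ≤ 1 := by
      rw [← hz.2]
      exact setLIntegral_le_lintegral A _
    have hQne : (∫⁻ x in A, l z x ∂μ) ≠ ∞ := (lt_of_le_of_lt hQle ENNReal.one_lt_top).ne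
    have hkf : (fun y => k z y * f y) = A.indicator (fun y => k z y) := by
      funext y
      by_cases hy : y ∈ A <;> simp [hf, indicator, hy]
    have hval : ∫ y, k z y * f y ∂μ = (∫⁻ x in A, l z x ∂μ).toReal := by
      rw [hkf, integral_indicator hA,
        integral_eq_lintegral_of_nonneg_ae (Filter.Eventually.of_forall (fun y => hk_nonneg z y))
          (hk_meas.comp measurable_prodMk_left).aestronglyMeasurable]
    rw [hval, Real.enorm_eq_ofReal ENNReal.toReal_nonneg, ENNReal.ofReal_toReal hQne]
  -- the rectangle estimate
  have rect : ∀ A B : Set E, MeasurableSet A → MeasurableSet B →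
      Integrable (A.indicator V) μ → Integrable (B.indicator V) μ →
      ∫⁻ p in A ×ˢ B, κ p ∂(μ.prod μ) ≤
        ENNReal.ofReal (∫ x in A, V x ∂μ) * ENNReal.ofReal (∫ x in B, V x ∂μ) := by
    intro A B hA hB hAi hBi
    have hswap : ∫⁻ p in A ×ˢ B, κ p ∂(μ.prod μ) =
        ∫⁻ z, (∫⁻ x in A, l z x ∂μ) * (∫⁻ y in B, l z y ∂μ) ∂μ := by
      rw [← Measure.prod_restrict, lintegral_prod _ hκ_meas.aemeasurable]
      have inner : ∀ x, ∫⁻ y in B, κ (x, y) ∂μ =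
          ∫⁻ z, l x z * (∫⁻ y in B, l z y ∂μ) ∂μ := by
        intro x
        have : ∫⁻ y in B, κ (x, y) ∂μ = ∫⁻ z, ∫⁻ y in B, l x z * l z y ∂μ ∂μ := by
          apply lintegral_lintegral_swap
          show AEMeasurable (fun q : E × E => l x q.2 * l q.2 q.1) _
          apply AEMeasurable.fun_mul
          · exact ((hl_meas.comp (measurable_const.prodMk measurable_snd))).aemeasurable
          · exact (hl_meas.comp (measurable_snd.prodMk measurable_fst)).aemeasurable
        rw [this]
        congr 1
        funext z
        rw [lintegral_const_mul _ (hl_meas_left z)]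
      calc ∫⁻ x in A, (∫⁻ y in B, κ (x, y) ∂μ) ∂μ
          = ∫⁻ x in A, ∫⁻ z, l x z * (∫⁻ y in B, l z y ∂μ) ∂μ ∂μ := by
            apply lintegral_congr
            intro x
            exact inner x
        _ = ∫⁻ z, ∫⁻ x in A, l x z * (∫⁻ y in B, l z y ∂μ) ∂μ ∂μ := by
            apply lintegral_lintegral_swap
            apply AEMeasurable.mul
            · exact (hl_meas.comp (measurable_fst.prodMk measurable_snd)).aemeasurable
            · exact ((Measurable.lintegral_prod_right
                (hl_meas.comp (measurable_fst.prodMk measurable_snd)) :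
                  Measurable fun z => ∫⁻ y, l z y ∂(μ.restrict B)).comp
                    measurable_snd).aemeasurable
        _ = ∫⁻ z, (∫⁻ x in A, l x z ∂μ) * (∫⁻ y in B, l z y ∂μ) ∂μ := by
            apply lintegral_congr
            intro z
            rw [lintegral_mul_const _ (hl_meas_right z)]
        _ = ∫⁻ z, (∫⁻ x in A, l z x ∂μ) * (∫⁻ y in B, l z y ∂μ) ∂μ := by
            apply lintegral_congr
            intro z
            congr 1
            apply lintegral_congr
            intro x
            exact congrArg ENNReal.ofReal (hk_symm x z)
    rw [hswap]
    have hQAm : Measurable fun z => ∫⁻ x in A, l z x ∂μ :=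
      Measurable.lintegral_prod_right (hl_meas.comp (measurable_fst.prodMk measurable_snd))
    have hQBm : Measurable fun z => ∫⁻ y in B, l z y ∂μ :=
      Measurable.lintegral_prod_right (hl_meas.comp (measurable_fst.prodMk measurable_snd))
    have hconj : Real.HolderConjugate 2 2 := Real.HolderConjugate.two_two
    calc ∫⁻ z, (∫⁻ x in A, l z x ∂μ) * (∫⁻ y in B, l z y ∂μ) ∂μ
        ≤ (∫⁻ z, (∫⁻ x in A, l z x ∂μ) ^ (2:ℝ) ∂μ) ^ ((1:ℝ)/2) *
          (∫⁻ z, (∫⁻ y in B, l z y ∂μ) ^ (2:ℝ) ∂μ) ^ ((1:ℝ)/2) :=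
          ENNReal.lintegral_mul_le_Lp_mul_Lq μ hconj hQAm.aemeasurable hQBm.aemeasurable
      _ ≤ ENNReal.ofReal (∫ x in A, V x ∂μ) * ENNReal.ofReal (∫ x in B, V x ∂μ) :=
          mul_le_mul' (hLp A hA hAi) (hLp B hB hBi)
  -- apply the core lemma on sublevel sets of V
  have hcover : ∀ a b : ℚ, 0 < a → 0 < b →
      (μ.prod μ) ({p : E × E | ENNReal.ofReal (a:ℝ) * ENNReal.ofReal (b:ℝ) < κ p} ∩
        ({x | V x < (a:ℝ)} ×ˢ {x | V x < (b:ℝ)})) = 0 := by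
    intro a b ha hb
    set Ua := {x | V x < (a:ℝ)} with hUa
    set Ub := {x | V x < (b:ℝ)} with hUb
    have hUam : MeasurableSet Ua := measurableSet_lt hV_meas measurable_const
    have hUbm : MeasurableSet Ub := measurableSet_lt hV_meas measurable_const
    set ρ := μ.restrict Ua with hρ
    set ρ' := μ.restrict Ub with hρ'
    have hrect : ∀ A B, MeasurableSet A → MeasurableSet B → ρ A < ∞ → ρ' B < ∞ →
        ∫⁻ p in A ×ˢ B, κ p ∂(ρ.prod ρ') ≤
          (ENNReal.ofReal (a:ℝ) * ENNReal.ofReal (b:ℝ)) * (ρ A * ρ' B) := by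
      intro A B hAm hBm hAfin hBfin
      have hres : ∫⁻ p in A ×ˢ B, κ p ∂(ρ.prod ρ') =
          ∫⁻ p in (A ∩ Ua) ×ˢ (B ∩ Ub), κ p ∂(μ.prod μ) := by
        rw [hρ, hρ', Measure.prod_restrict, Measure.restrict_restrict (hAm.prod hBm),
          Set.prod_inter_prod]
      have hA' : MeasurableSet (A ∩ Ua) := hAm.inter hUam
      have hB' : MeasurableSet (B ∩ Ub) := hBm.inter hUbm
      have hμA' : μ (A ∩ Ua) < ∞ := by
        rw [hρ, Measure.restrict_apply hAm] at hAfin; exact hAfin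
      have hμB' : μ (B ∩ Ub) < ∞ := by
        rw [hρ', Measure.restrict_apply hBm] at hBfin; exact hBfin
      have hindA : Integrable ((A ∩ Ua).indicator V) μ := by
        rw [integrable_indicator_iff hA']
        apply Measure.integrableOn_of_bounded (M := (a:ℝ)) hμA'.ne hV_meas.aestronglyMeasurable
        filter_upwards [ae_restrict_mem hA'] with x hx
        rw [Real.norm_eq_abs, abs_of_nonneg (hV_pos x).le]
        exact le_of_lt hx.2
      have hindB : Integrable ((B ∩ Ub).indicator V) μ := by
        rw [integrable_indicator_iff hB']
        apply Measure.integrableOn_of_bounded (M := (b:ℝ)) hμB'.ne hV_meas.aestronglyMeasurable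
        filter_upwards [ae_restrict_mem hB'] with x hx
        rw [Real.norm_eq_abs, abs_of_nonneg (hV_pos x).le]
        exact le_of_lt hx.2
      have hVA : ∫ x in A ∩ Ua, V x ∂μ ≤ (a:ℝ) * (μ (A ∩ Ua)).toReal := by
        calc ∫ x in A ∩ Ua, V x ∂μ ≤ ∫ _ in A ∩ Ua, (a:ℝ) ∂μ :=
              setIntegral_mono_on ((integrable_indicator_iff hA').1 hindA)
                (integrableOn_const hμA'.ne) hA' (fun x hx => le_of_lt hx.2)
          _ = (a:ℝ) * (μ (A ∩ Ua)).toReal := by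
              rw [setIntegral_const, smul_eq_mul, mul_comm]; rfl
      have hVB : ∫ x in B ∩ Ub, V x ∂μ ≤ (b:ℝ) * (μ (B ∩ Ub)).toReal := by
        calc ∫ x in B ∩ Ub, V x ∂μ ≤ ∫ _ in B ∩ Ub, (b:ℝ) ∂μ :=
              setIntegral_mono_on ((integrable_indicator_iff hB').1 hindB)
                (integrableOn_const hμB'.ne) hB' (fun x hx => le_of_lt hx.2)
          _ = (b:ℝ) * (μ (B ∩ Ub)).toReal := by
              rw [setIntegral_const, smul_eq_mul, mul_comm]; rfl
      rw [hres]
      refine le_trans (rect _ _ hA' hB' hindA hindB) ?_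
      have h1 : ENNReal.ofReal (∫ x in A ∩ Ua, V x ∂μ) ≤ ENNReal.ofReal (a:ℝ) * μ (A ∩ Ua) := by
        calc ENNReal.ofReal (∫ x in A ∩ Ua, V x ∂μ) ≤
              ENNReal.ofReal ((a:ℝ) * (μ (A ∩ Ua)).toReal) := ENNReal.ofReal_le_ofReal hVA
          _ = ENNReal.ofReal (a:ℝ) * ENNReal.ofReal ((μ (A ∩ Ua)).toReal) :=
              ENNReal.ofReal_mul (by exact_mod_cast ha.le)
          _ = ENNReal.ofReal (a:ℝ) * μ (A ∩ Ua) := by rw [ENNReal.ofReal_toReal hμA'.ne]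
      have h2 : ENNReal.ofReal (∫ x in B ∩ Ub, V x ∂μ) ≤ ENNReal.ofReal (b:ℝ) * μ (B ∩ Ub) := by
        calc ENNReal.ofReal (∫ x in B ∩ Ub, V x ∂μ) ≤
              ENNReal.ofReal ((b:ℝ) * (μ (B ∩ Ub)).toReal) := ENNReal.ofReal_le_ofReal hVB
          _ = ENNReal.ofReal (b:ℝ) * ENNReal.ofReal ((μ (B ∩ Ub)).toReal) :=
              ENNReal.ofReal_mul (by exact_mod_cast hb.le)
          _ = ENNReal.ofReal (b:ℝ) * μ (B ∩ Ub) := by rw [ENNReal.ofReal_toReal hμB'.ne]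
      calc ENNReal.ofReal (∫ x in A ∩ Ua, V x ∂μ) * ENNReal.ofReal (∫ x in B ∩ Ub, V x ∂μ)
          ≤ (ENNReal.ofReal (a:ℝ) * μ (A ∩ Ua)) * (ENNReal.ofReal (b:ℝ) * μ (B ∩ Ub)) :=
            mul_le_mul' h1 h2
        _ = (ENNReal.ofReal (a:ℝ) * ENNReal.ofReal (b:ℝ)) * (μ (A ∩ Ua) * μ (B ∩ Ub)) := by
            ring
        _ = (ENNReal.ofReal (a:ℝ) * ENNReal.ofReal (b:ℝ)) * (ρ A * ρ' B) := by
            rw [hρ, hρ', Measure.restrict_apply hAm, Measure.restrict_apply hBm]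
    have hcore := coreLemma ρ ρ' κ hκ_meas (ENNReal.ofReal (a:ℝ) * ENNReal.ofReal (b:ℝ))
      (ENNReal.mul_ne_top ENNReal.ofReal_ne_top ENNReal.ofReal_ne_top) hrect
    rw [ae_iff] at hcore
    have hset : {p : E × E | ¬ κ p ≤ ENNReal.ofReal (a:ℝ) * ENNReal.ofReal (b:ℝ)} =
        {p : E × E | ENNReal.ofReal (a:ℝ) * ENNReal.ofReal (b:ℝ) < κ p} := by
      ext p; simp [not_le]
    have hSm : MeasurableSet {p : E × E | ENNReal.ofReal (a:ℝ) * ENNReal.ofReal (b:ℝ) < κ p} :=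
      hκ_meas measurableSet_Ioi
    rw [hset, hρ, hρ', Measure.prod_restrict, Measure.restrict_apply hSm] at hcore
    exact hcore
  -- covering: pass from rational levels to V itself
  have main : ∀ᵐ p ∂(μ.prod μ), κ p ≤ ENNReal.ofReal (V p.1 * V p.2) := by
    rw [ae_iff]
    have hsub : {p : E × E | ¬ κ p ≤ ENNReal.ofReal (V p.1 * V p.2)} ⊆
        ⋃ q : ℚ × ℚ, (if 0 < q.1 ∧ 0 < q.2 then
          ({p : E × E | ENNReal.ofReal (q.1:ℝ) * ENNReal.ofReal (q.2:ℝ) < κ p} ∩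
            ({x | V x < (q.1:ℝ)} ×ˢ {x | V x < (q.2:ℝ)})) else ∅) := by
      intro p hp
      simp only [mem_setOf_eq, not_le] at hp
      have hV1 : 0 < V p.1 := hV_pos _
      have hV2 : 0 < V p.2 := hV_pos _
      obtain ⟨a, b, ha1, hb1, hab⟩ : ∃ a b : ℚ, V p.1 < (a:ℝ) ∧ V p.2 < (b:ℝ) ∧
          ENNReal.ofReal ((a:ℝ) * (b:ℝ)) < κ p := by
        rcases eq_or_ne (κ p) ∞ with htop | hne
        · obtain ⟨a, ha⟩ := exists_rat_gt (V p.1)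
          obtain ⟨b, hb⟩ := exists_rat_gt (V p.2)
          exact ⟨a, b, ha, hb, by rw [htop]; exact ENNReal.ofReal_lt_top⟩
        · have hprodpos : 0 < V p.1 * V p.2 := by positivity
          have hlt : V p.1 * V p.2 < (κ p).toReal :=
            (ENNReal.ofReal_lt_iff_lt_toReal hprodpos.le hne).1 hp
          set s := Real.sqrt ((κ p).toReal / (V p.1 * V p.2)) with hs
          have hs1 : 1 < s := by
            rw [hs, show (1:ℝ) = Real.sqrt 1 from (Real.sqrt_one).symm]
            apply Real.sqrt_lt_sqrt (by norm_num)
            rw [lt_div_iff₀ hprodpos]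
            linarith
          obtain ⟨a, ha1, ha2⟩ := exists_rat_btwn (show V p.1 < s * V p.1 by nlinarith)
          obtain ⟨b, hb1, hb2⟩ := exists_rat_btwn (show V p.2 < s * V p.2 by nlinarith)
          refine ⟨a, b, ha1, hb1, ?_⟩
          have hss : s * s = (κ p).toReal / (V p.1 * V p.2) :=
            Real.mul_self_sqrt (by positivity)
          have habs : (a:ℝ) * (b:ℝ) < (κ p).toReal := by
            have h1 : (a:ℝ) * (b:ℝ) < (s * V p.1) * (s * V p.2) := by nlinarith
            have h2 : (s * V p.1) * (s * V p.2) = (s * s) * (V p.1 * V p.2) := by ring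
            have h3 : (s * s) * (V p.1 * V p.2) = (κ p).toReal := by
              rw [hss]; field_simp
            linarith
          have htpos : (0:ℝ) < (κ p).toReal := lt_trans hprodpos hlt
          calc ENNReal.ofReal ((a:ℝ) * (b:ℝ)) < ENNReal.ofReal ((κ p).toReal) :=
                (ENNReal.ofReal_lt_ofReal_iff htpos).2 habs
            _ = κ p := ENNReal.ofReal_toReal hne
      have hapos : 0 < a := by
        have : (0:ℝ) < (a:ℝ) := lt_trans hV1 ha1
        exact_mod_cast this
      have hbpos : 0 < b := by
        have : (0:ℝ) < (b:ℝ) := lt_trans hV2 hb1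
        exact_mod_cast this
      refine mem_iUnion.2 ⟨(a, b), ?_⟩
      rw [if_pos ⟨hapos, hbpos⟩]
      refine ⟨?_, ha1, hb1⟩
      show ENNReal.ofReal (a:ℝ) * ENNReal.ofReal (b:ℝ) < κ p
      rw [← ENNReal.ofReal_mul (by exact_mod_cast hapos.le)]
      exact hab
    refine measure_mono_null hsub (measure_iUnion_null fun q => ?_)
    by_cases hq : 0 < q.1 ∧ 0 < q.2
    · rw [if_pos hq]; exact hcover q.1 q.2 hq.1 hq.2
    · rw [if_neg hq]; exact measure_empty
  -- final conversion to Bochner integrals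
  filter_upwards [main] with p hp
  have hm1 : Measurable fun z => k p.1 z * k z p.2 :=
    (hk_meas.comp measurable_prodMk_left).mul
      (hk_meas.comp (measurable_id.prodMk measurable_const))
  have hnn : 0 ≤ᵐ[μ] fun z => k p.1 z * k z p.2 :=
    Filter.Eventually.of_forall fun z => mul_nonneg (hk_nonneg _ _) (hk_nonneg _ _)
  rw [integral_eq_lintegral_of_nonneg_ae hnn hm1.aestronglyMeasurable]
  have heq : ∫⁻ z, ENNReal.ofReal (k p.1 z * k z p.2) ∂μ = κ p := by
    apply lintegral_congr
    intro z
    rw [ENNReal.ofReal_mul (hk_nonneg _ _)]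
  rw [heq]
  calc (κ p).toReal ≤ (ENNReal.ofReal (V p.1 * V p.2)).toReal :=
        ENNReal.toReal_mono ENNReal.ofReal_ne_top hp
    _ = V p.1 * V p.2 := ENNReal.toReal_ofReal (mul_nonneg (hV_pos p.1).le (hV_pos p.2).le)
end
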